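/- arXiv:2405.16954 — 4 statements merged into one kernel-verified Lean document; each statement's English description precedes it below -/
import Mathlib

section
/- Suppose the positive step sizes {α_k} satisfy α_k → 0 and Σ_{k≥1} α_k = ∞. Then for every time window T > 0 (with associated time indices {γ_k}) and every δ ∈ [0,1), there exists K_δ ∈ ℕ such that δT ≤ Δ_{γ_k, γ_{k+1}} ≤ T for all k ≥ K_δ. -/
open MeasureTheory Filter Topology Asymptotics ENNReal

noncomputable section

/-- `Δ_{k,n} = α_k + ⋯ + α_{n-1}` (and `Δ_{k,k} = 0`). -/
def timeScale (a : ℕ → ℝ) (k n : ℕ) : ℝ := ∑ i ∈ Finset.Ico k n, a i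

/-- `ϖ(k,T) = max {k+1, sup {n ≥ k : Δ_{k,n} ≤ T}}`. -/
def varpi (a : ℕ → ℝ) (T : ℝ) (k : ℕ) : ℕ :=
  max (k + 1) (sSup {n : ℕ | k ≤ n ∧ timeScale a k n ≤ T})

/-- Time indices: `γ 1 = 1`, `γ (k+1) = ϖ(γ k, T)` (with junk value `γ 0 = 1`). -/
def timeIdx (a : ℕ → ℝ) (T : ℝ) : ℕ → ℕ
  | 0 => 1
  | 1 => 1
  | k + 2 => varpi a T (timeIdx a T (k + 1))

lemma ts_mono (a : ℕ → ℝ) (hapos : ∀ k, 1 ≤ k → 0 < a k) {g : ℕ} (hg : 1 ≤ g)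
    {m n : ℕ} (hmn : m ≤ n) : timeScale a g m ≤ timeScale a g n := by
  apply Finset.sum_le_sum_of_subset_of_nonneg (Finset.Ico_subset_Ico le_rfl hmn)
  intro i hi _
  exact (hapos i (le_trans hg (Finset.mem_Ico.mp hi).1)).le

lemma ts_unbounded (a : ℕ → ℝ)
    (hadiv : Tendsto (fun n => ∑ i ∈ Finset.Icc 1 n, a i) atTop atTop)
    {g : ℕ} (hg : 1 ≤ g) (C : ℝ) :
    ∃ n, g ≤ n ∧ C < timeScale a g n := by
  obtain ⟨N, hN⟩ := (tendsto_atTop.mp hadiv (C + timeScale a 1 g + 1)).exists_forall_of_atTop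
  refine ⟨max N g + 1, by omega, ?_⟩
  have h1 : timeScale a 1 g + timeScale a g (max N g + 1) = timeScale a 1 (max N g + 1) :=
    Finset.sum_Ico_consecutive a hg (by omega)
  have h2 : timeScale a 1 (max N g + 1) = ∑ i ∈ Finset.Icc 1 (max N g), a i := by
    rw [timeScale, Finset.Ico_add_one_right_eq_Icc]
  have h3 := hN (max N g) (le_max_left _ _)
  change C + timeScale a 1 g + 1 ≤ ∑ i ∈ Finset.Icc 1 (max N g), a i at h3
  linarith

lemma timeIdx_ge (a : ℕ → ℝ) (T : ℝ) : ∀ k, k ≤ timeIdx a T (k + 1) := by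
  intro k
  induction k with
  | zero => simp [timeIdx]
  | succ j ih =>
      have : timeIdx a T (j + 1) + 1 ≤ timeIdx a T (j + 1 + 1) := le_max_left _ _
      omega

lemma varpi_key (a : ℕ → ℝ) (hapos : ∀ k, 1 ≤ k → 0 < a k)
    (hadiv : Tendsto (fun n => ∑ i ∈ Finset.Icc 1 n, a i) atTop atTop)
    (T : ℝ) {g : ℕ} (hg : 1 ≤ g) (hgT : a g ≤ T) :
    g + 1 ≤ varpi a T g ∧ timeScale a g (varpi a T g) ≤ T ∧
      T < timeScale a g (varpi a T g) + a (varpi a T g) := by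
  set S := {n : ℕ | g ≤ n ∧ timeScale a g n ≤ T} with hS
  obtain ⟨M, hMg, hM⟩ := ts_unbounded a hadiv hg T
  have hbdd : BddAbove S := by
    refine ⟨M, fun n hn => ?_⟩
    by_contra hc
    push_neg at hc
    have := ts_mono a hapos hg hc.le
    linarith [hn.2]
  have hg1 : g + 1 ∈ S := by
    constructor
    · omega
    · have : timeScale a g (g + 1) = a g := by
        rw [timeScale]
        simp
      rw [this]; exact hgT
  have hSne : S.Nonempty := ⟨g + 1, hg1⟩
  have hmem := Nat.sSup_mem hSne hbdd
  have hle : g + 1 ≤ sSup S := le_csSup hbdd hg1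
  have hvar : varpi a T g = sSup S := max_eq_right hle
  have hnot : sSup S + 1 ∉ S := fun h => absurd (le_csSup hbdd h) (by omega)
  have hgm : g ≤ sSup S := by omega
  have hsucc : timeScale a g (sSup S + 1) = timeScale a g (sSup S) + a (sSup S) :=
    Finset.sum_Ico_succ_top hgm a
  have hgt : T < timeScale a g (sSup S + 1) := by
    by_contra hc
    push_neg at hc
    exact hnot ⟨by omega, hc⟩
  rw [hvar]
  exact ⟨hle, hmem.2, by linarith⟩

theorem stmt_0 (a : ℕ → ℝ) (hapos : ∀ k, 1 ≤ k → 0 < a k)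
    (ha0 : Tendsto a atTop (𝓝 0))
    (hadiv : Tendsto (fun n => ∑ i ∈ Finset.Icc 1 n, a i) atTop atTop)
    (T : ℝ) (hT : 0 < T) (δ : ℝ) (hδ : δ ∈ Set.Ico (0:ℝ) 1) :
    ∃ K : ℕ, ∀ k, K ≤ k →
      δ * T ≤ timeScale a (timeIdx a T k) (timeIdx a T (k + 1)) ∧
      timeScale a (timeIdx a T k) (timeIdx a T (k + 1)) ≤ T := by
  obtain ⟨hδ0, hδ1⟩ := hδ
  set ε := (1 - δ) * T with hε
  have hεpos : 0 < ε := by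
    apply _root_.mul_pos <;> linarith
  have hεT : ε ≤ T := by nlinarith
  obtain ⟨N, hN⟩ := Metric.tendsto_atTop.mp ha0 ε hεpos
  have hN' : ∀ n, N ≤ n → a n < ε := by
    intro n hn
    have := hN n hn
    rw [Real.dist_eq, sub_zero] at this
    exact lt_of_le_of_lt (le_abs_self _) this
  refine ⟨N + 2, fun k hk => ?_⟩
  obtain ⟨j, rfl⟩ : ∃ j, k = j + 1 := ⟨k - 1, by omega⟩
  set g := timeIdx a T (j + 1) with hg
  have hgj : j ≤ g := timeIdx_ge a T j
  have hg1 : 1 ≤ g := by omega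
  have hgN : N ≤ g := by omega
  have hgT : a g ≤ T := le_trans (hN' g hgN).le hεT
  have hidx : timeIdx a T (j + 2) = varpi a T g := rfl
  obtain ⟨h1, h2, h3⟩ := varpi_key a hapos hadiv T hg1 hgT
  have hmN : N ≤ varpi a T g := by omega
  have ham : a (varpi a T g) < ε := hN' _ hmN
  rw [hidx]
  constructor
  · nlinarith
  · exact h2
end
end

section
/- Under the SGDM setup with the noise assumption and step sizes satisfying condition (S) with non-decreasing sequence {β_k}, for every time window T > 0 with associated time indices {γ_k}, with probability 1 one has Σ_{k=1}^∞ β_{γ_k}² s_k² < ∞. -/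
open MeasureTheory Filter Topology Asymptotics ENNReal
open scoped RealInnerProductSpace

noncomputable section

/-- running maximum -/
def pmax (a : ℕ → ℝ) : ℕ → ℝ
  | 0 => a 0
  | n + 1 => max (pmax a n) (a (n + 1))

lemma le_pmax (a : ℕ → ℝ) : ∀ {j n : ℕ}, j ≤ n → a j ≤ pmax a n := by
  intro j n
  induction n with
  | zero => intro h; interval_cases j; rfl
  | succ n ih =>
    intro h
    rcases Nat.lt_or_ge j (n+1) with h'|h'
    · exact le_trans (ih (by omega)) (le_max_left _ _)
    · have : j = n + 1 := by omega
      subst this; exact le_max_right _ _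

lemma pmax_nonneg {a : ℕ → ℝ} (h : ∀ j, 0 ≤ a j) (n : ℕ) : 0 ≤ pmax a n :=
  le_trans (h 0) (le_pmax a (Nat.zero_le n))

lemma pmax_sum_le (a : ℕ → ℝ) (n : ℕ) :
    ∑ j ∈ Finset.range n, pmax a j * (a (j + 1) - a j) ≤ pmax a n * a n - pmax a n ^ 2 / 2 := by
  induction n with
  | zero => simp [pmax]; nlinarith [sq_nonneg (a 0)]
  | succ n ih =>
    rw [Finset.sum_range_succ]
    have hpm : pmax a (n+1) = max (pmax a n) (a (n+1)) := rfl
    rcases le_or_gt (a (n+1)) (pmax a n) with h|h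
    · rw [hpm, max_eq_left h]; nlinarith
    · rw [hpm, max_eq_right h.le]; nlinarith [sq_nonneg (a (n+1) - pmax a n)]

lemma pmax_sq_le (a : ℕ → ℝ) (n : ℕ) :
    pmax a n ^ 2 ≤ 4 * a n ^ 2 - 4 * ∑ j ∈ Finset.range n, pmax a j * (a (j + 1) - a j) := by
  have h1 := pmax_sum_le a n
  have h2 : a n ≤ pmax a n := le_pmax a le_rfl
  nlinarith [sq_nonneg (2 * a n - pmax a n)]

lemma measurable_finset_sup' {Ω : Type*} [MeasurableSpace Ω] {ι : Type*} (s : Finset ι)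
    (hs : s.Nonempty) (f : ι → Ω → ℝ) (hf : ∀ i, Measurable (f i)) :
    Measurable fun ω => s.sup' hs (f · ω) := by
  induction hs using Finset.Nonempty.cons_induction with
  | singleton i => simpa using hf i
  | cons i s hi hs ih =>
    have : (fun ω => (Finset.cons i s hi).sup' (Finset.cons_nonempty hi) (f · ω))
        = fun ω => max (f i ω) (s.sup' hs (f · ω)) := by
      funext ω; rw [Finset.sup'_cons hs]
    rw [this]; exact (hf i).max ih

lemma coord_abs_le_norm {d : ℕ} (v : EuclideanSpace ℝ (Fin d)) (j : Fin d) : |v j| ≤ ‖v‖ := by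
  rw [EuclideanSpace.norm_eq, ← Real.sqrt_sq_eq_abs]
  apply Real.sqrt_le_sqrt
  have := Finset.single_le_sum (f := fun i => ‖v i‖ ^ 2) (fun i _ => sq_nonneg _)
    (Finset.mem_univ j)
  simpa [sq_abs] using this

section Prob

variable {Ω : Type*} {m0 : MeasurableSpace Ω} {μ : Measure Ω} [IsProbabilityMeasure μ] {d : ℕ}

lemma integrable_inner2 {Y Z : Ω → EuclideanSpace ℝ (Fin d)} (hY : MemLp Y 2 μ)
    (hZ : MemLp Z 2 μ) : Integrable (fun ω => ⟪Y ω, Z ω⟫) μ := by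
  have hb : MemLp ((fun ω => ‖Y ω‖) • fun ω => ‖Z ω‖) 1 μ :=
    hZ.norm.smul hY.norm
  have hb' : Integrable (fun ω => ‖Y ω‖ * ‖Z ω‖) μ := by
    have := memLp_one_iff_integrable.mp hb
    exact this
  refine hb'.mono' (hY.aestronglyMeasurable.inner hZ.aestronglyMeasurable) ?_
  exact Eventually.of_forall fun ω => norm_inner_le_norm _ _

lemma ortho_zero (ℱ : Filtration ℕ m0) (i : ℕ) {e : Ω → EuclideanSpace ℝ (Fin d)}
    (he2 : MemLp e 2 μ) (hmean : μ[e|ℱ i] =ᵐ[μ] 0)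
    {Y : Ω → EuclideanSpace ℝ (Fin d)} (hY : StronglyMeasurable[ℱ i] Y) (hY2 : MemLp Y 2 μ) :
    ∫ ω, ⟪Y ω, e ω⟫ ∂μ = 0 := by
  have hm : ℱ i ≤ m0 := ℱ.le i
  have he1 : Integrable e μ := he2.integrable one_le_two
  have hrw : ∀ ω, ⟪Y ω, e ω⟫ = ∑ j : Fin d, Y ω j * e ω j := by
    intro ω
    simp [PiLp.inner_apply, RCLike.inner_apply, conj_trivial]
    exact Finset.sum_congr rfl fun _ _ => mul_comm _ _
  have hcmeasY : ∀ j : Fin d, StronglyMeasurable[ℱ i] (fun ω => Y ω j) := fun j =>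
    (EuclideanSpace.proj (𝕜 := ℝ) j).continuous.comp_stronglyMeasurable hY
  have hcY2 : ∀ j : Fin d, MemLp (fun ω => Y ω j) 2 μ := fun j =>
    hY2.of_le ((hcmeasY j).mono hm).aestronglyMeasurable
      (Eventually.of_forall fun ω => by
        simpa [Real.norm_eq_abs] using coord_abs_le_norm (Y ω) j)
  have hce2 : ∀ j : Fin d, MemLp (fun ω => e ω j) 2 μ := fun j =>
    he2.of_le ((EuclideanSpace.proj (𝕜 := ℝ) j).continuous.comp_aestronglyMeasurable
      he2.aestronglyMeasurable)
      (Eventually.of_forall fun ω => by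
        simpa [Real.norm_eq_abs] using coord_abs_le_norm (e ω) j)
  have hint : ∀ j : Fin d, Integrable (fun ω => Y ω j * e ω j) μ := by
    intro j
    have h1 : MemLp _ 1 μ := ((hce2 j).smul (hcY2 j))
    have h2 := memLp_one_iff_integrable.mp h1
    exact h2
  have hcond0 : ∀ j : Fin d, μ[(fun ω => e ω j)|ℱ i] =ᵐ[μ] 0 := by
    intro j
    have h0m : StronglyMeasurable[ℱ i] (fun _ : Ω => (0:ℝ)) := stronglyMeasurable_const
    refine (ae_eq_condExp_of_forall_setIntegral_eq hm
      ((hce2 j).integrable one_le_two)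
      (fun s _ _ => (integrable_zero _ _ _).integrableOn)
      (fun s hs hμs => ?_)
      h0m.aestronglyMeasurable).symm
    have h2 : ∫ x in s, e x ∂μ = 0 := by
      rw [← setIntegral_condExp hm he1 hs,
        setIntegral_congr_ae (hm s hs) (hmean.mono fun ω hω _ => hω)]
      simp
    have h1 := (EuclideanSpace.proj (𝕜 := ℝ) j).integral_comp_comm (he1.integrableOn (s := s))
    calc ∫ x in s, (0:ℝ) ∂μ = 0 := by simp
      _ = EuclideanSpace.proj (𝕜 := ℝ) j (0 : EuclideanSpace ℝ (Fin d)) := by simp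
      _ = EuclideanSpace.proj (𝕜 := ℝ) j (∫ x in s, e x ∂μ) := by rw [h2]
      _ = ∫ x in s, EuclideanSpace.proj (𝕜 := ℝ) j (e x) ∂μ := h1.symm
      _ = ∫ x in s, e x j ∂μ := rfl
  have hzero : ∀ j : Fin d, ∫ ω, Y ω j * e ω j ∂μ = 0 := by
    intro j
    have hpull := condExp_mul_of_stronglyMeasurable_left (hcmeasY j) (hint j)
      ((hce2 j).integrable one_le_two)
    calc ∫ ω, Y ω j * e ω j ∂μ
        = ∫ ω, (μ[(fun ω => Y ω j * e ω j)|ℱ i]) ω ∂μ := (integral_condExp hm).symm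
      _ = ∫ ω, Y ω j * (μ[(fun ω => e ω j)|ℱ i]) ω ∂μ := integral_congr_ae hpull
      _ = ∫ ω, (0:ℝ) ∂μ := integral_congr_ae ((hcond0 j).mono fun ω hω => by
            simp [hω])
      _ = 0 := integral_zero _ _
  calc ∫ ω, ⟪Y ω, e ω⟫ ∂μ = ∫ ω, ∑ j : Fin d, Y ω j * e ω j ∂μ := by
        simp_rw [hrw]
    _ = ∑ j : Fin d, ∫ ω, Y ω j * e ω j ∂μ := integral_finset_sum _ (fun j _ => hint j)
    _ = 0 := by simp [hzero]

lemma block_bound (ℱ : Filtration ℕ m0) (D : ℕ → Ω → EuclideanSpace ℝ (Fin d)) (g : ℕ)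
    (hmeas : ∀ i, g ≤ i → StronglyMeasurable[ℱ (i+1)] (D i))
    (h2 : ∀ i, g ≤ i → MemLp (D i) 2 μ)
    (hO : ∀ i, g ≤ i → ∀ Y : Ω → EuclideanSpace ℝ (Fin d), StronglyMeasurable[ℱ i] Y →
      MemLp Y 2 μ → ∫ ω, ⟪Y ω, D i ω⟫ ∂μ = 0)
    (n : ℕ) :
    Integrable (fun ω => pmax (fun j => ‖∑ i ∈ Finset.Ico g (g+j), D i ω‖) n ^ 2) μ ∧
      ∫ ω, pmax (fun j => ‖∑ i ∈ Finset.Ico g (g+j), D i ω‖) n ^ 2 ∂μ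
        ≤ 4 * ∑ i ∈ Finset.Ico g (g+n), ∫ ω, ‖D i ω‖^2 ∂μ := by
  classical
  set S : ℕ → Ω → EuclideanSpace ℝ (Fin d) := fun t ω => ∑ i ∈ Finset.Ico g t, D i ω with hSdef
  set a : Ω → ℕ → ℝ := fun ω j => ‖S (g+j) ω‖ with hadef
  have hSmeas : ∀ t, StronglyMeasurable[ℱ t] (S t) := by
    intro t
    apply Finset.stronglyMeasurable_fun_sum
    intro i hi
    rw [Finset.mem_Ico] at hi
    exact (hmeas i hi.1).mono (ℱ.mono hi.2)
  have hS2 : ∀ t, MemLp (S t) 2 μ := by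
    intro t
    apply memLp_finset_sum
    intro i hi
    rw [Finset.mem_Ico] at hi
    exact h2 i hi.1
  have hSsucc : ∀ j ω, S (g+(j+1)) ω = S (g+j) ω + D (g+j) ω := by
    intro j ω
    show ∑ i ∈ Finset.Ico g (g+(j+1)), D i ω = _
    rw [show g+(j+1) = (g+j)+1 from rfl, Finset.sum_Ico_succ_top (Nat.le_add_right g j)]
  have hInormSq : ∀ t, Integrable (fun ω => ‖S t ω‖^2) μ := fun t =>
    (memLp_two_iff_integrable_sq_norm (hS2 t).aestronglyMeasurable).mp (hS2 t)
  have hIDSq : ∀ i, g ≤ i → Integrable (fun ω => ‖D i ω‖^2) μ := fun i hi =>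
    (memLp_two_iff_integrable_sq_norm (h2 i hi).aestronglyMeasurable).mp (h2 i hi)
  -- second moment of the terminal sum
  have hSbound : ∀ m : ℕ, ∫ ω, ‖S (g+m) ω‖^2 ∂μ ≤ ∑ i ∈ Finset.Ico g (g+m), ∫ ω, ‖D i ω‖^2 ∂μ := by
    intro m
    induction m with
    | zero => simp [hSdef]
    | succ m ih =>
      have hIinner : Integrable (fun ω => ⟪S (g+m) ω, D (g+m) ω⟫) μ :=
        integrable_inner2 (hS2 (g+m)) (h2 (g+m) (Nat.le_add_right g m))
      have hzero : ∫ ω, ⟪S (g+m) ω, D (g+m) ω⟫ ∂μ = 0 :=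
        hO (g+m) (Nat.le_add_right g m) (S (g+m)) (hSmeas (g+m)) (hS2 (g+m))
      have hptw : ∀ ω, ‖S (g+(m+1)) ω‖^2
          = ‖S (g+m) ω‖^2 + 2 * ⟪S (g+m) ω, D (g+m) ω⟫ + ‖D (g+m) ω‖^2 := by
        intro ω; rw [hSsucc m ω]; exact norm_add_sq_real _ _
      calc ∫ ω, ‖S (g+(m+1)) ω‖^2 ∂μ
          = ∫ ω, (‖S (g+m) ω‖^2 + 2 * ⟪S (g+m) ω, D (g+m) ω⟫ + ‖D (g+m) ω‖^2) ∂μ := by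
            exact integral_congr_ae (Eventually.of_forall hptw)
        _ = ∫ ω, ‖S (g+m) ω‖^2 ∂μ + 2 * ∫ ω, ⟪S (g+m) ω, D (g+m) ω⟫ ∂μ
              + ∫ ω, ‖D (g+m) ω‖^2 ∂μ := by
            have hB : Integrable (fun ω => 2 * ⟪S (g+m) ω, D (g+m) ω⟫) μ :=
              hIinner.const_mul 2
            have hAB : Integrable
                (fun ω => ‖S (g+m) ω‖^2 + 2 * ⟪S (g+m) ω, D (g+m) ω⟫) μ := by
              exact (hInormSq (g+m)).add hB
            rw [integral_add hAB (hIDSq (g+m) (Nat.le_add_right g m)),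
              integral_add (hInormSq (g+m)) hB, integral_const_mul]
        _ ≤ (∑ i ∈ Finset.Ico g (g+m), ∫ ω, ‖D i ω‖^2 ∂μ) + 0 + ∫ ω, ‖D (g+m) ω‖^2 ∂μ := by
            rw [hzero]; simp only [mul_zero]; linarith
        _ = ∑ i ∈ Finset.Ico g (g+(m+1)), ∫ ω, ‖D i ω‖^2 ∂μ := by
            rw [show g+(m+1) = (g+m)+1 from rfl,
              Finset.sum_Ico_succ_top (Nat.le_add_right g m)]
            ring
  -- running max measurability and integrability
  have hameas : ∀ j, StronglyMeasurable[ℱ (g+j)] (fun ω => a ω j) := fun j => (hSmeas (g+j)).norm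
  have ha2 : ∀ j, MemLp (fun ω => a ω j) 2 μ := fun j => (hS2 (g+j)).norm
  have hanonneg : ∀ ω j, 0 ≤ a ω j := fun ω j => norm_nonneg _
  have hPmeas : ∀ j, StronglyMeasurable[ℱ (g+j)] (fun ω => pmax (a ω) j) := by
    intro j
    induction j with
    | zero => exact hameas 0
    | succ j ih =>
      exact ((((ih.mono (ℱ.mono (Nat.le_succ (g+j)))).measurable).max
        (hameas (j+1)).measurable).stronglyMeasurable :
          StronglyMeasurable[ℱ (g+(j+1))] fun ω => max (pmax (a ω) j) (a ω (j+1)))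
  have hPnonneg : ∀ ω j, 0 ≤ pmax (a ω) j := fun ω j => pmax_nonneg (hanonneg ω) j
  have hP2 : ∀ j, MemLp (fun ω => pmax (a ω) j) 2 μ := by
    intro j
    induction j with
    | zero => exact ha2 0
    | succ j ih =>
      refine MemLp.of_le (ih.add (ha2 (j+1)))
        ((hPmeas (j+1)).mono (ℱ.le _)).aestronglyMeasurable
        (Eventually.of_forall fun ω => ?_)
      have h1 : pmax (a ω) (j+1) = max (pmax (a ω) j) (a ω (j+1)) := rfl
      have h2 : ((fun ω => pmax (a ω) j) + fun ω => a ω (j+1)) ω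
          = pmax (a ω) j + a ω (j+1) := rfl
      have hp := hPnonneg ω j
      have hq := hanonneg ω (j+1)
      rw [Real.norm_eq_abs, Real.norm_eq_abs, h1, h2,
        abs_of_nonneg (le_max_of_le_left hp),
        abs_of_nonneg (by linarith : (0:ℝ) ≤ pmax (a ω) j + a ω (j+1))]
      exact max_le (by linarith) (by linarith)
  -- the predictable direction process
  set u : ℕ → Ω → EuclideanSpace ℝ (Fin d) :=
    fun j ω => (‖S (g+j) ω‖)⁻¹ • S (g+j) ω with hudef
  have hu_norm : ∀ j ω, ‖u j ω‖ ≤ 1 := by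
    intro j ω
    by_cases h : S (g+j) ω = 0
    · simp [hudef, h]
    · have hn : ‖S (g+j) ω‖ ≠ 0 := norm_ne_zero_iff.mpr h
      rw [hudef]
      simp only [norm_smul, norm_inv, norm_norm]
      rw [inv_mul_cancel₀ hn]
  have humeas : ∀ j, StronglyMeasurable[ℱ (g+j)] (u j) := by
    intro j
    exact (((hSmeas (g+j)).norm.measurable.inv).stronglyMeasurable).smul (hSmeas (g+j))
  set Y : ℕ → Ω → EuclideanSpace ℝ (Fin d) := fun j ω => pmax (a ω) j • u j ω with hYdef
  have hYmeas : ∀ j, StronglyMeasurable[ℱ (g+j)] (Y j) := fun j =>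
    (hPmeas j).smul (humeas j)
  have hY2 : ∀ j, MemLp (Y j) 2 μ := by
    intro j
    refine MemLp.of_le (hP2 j) ((hYmeas j).mono (ℱ.le _)).aestronglyMeasurable
      (Eventually.of_forall fun ω => ?_)
    rw [hYdef]
    simp only [norm_smul, Real.norm_eq_abs, abs_of_nonneg (hPnonneg ω j)]
    calc pmax (a ω) j * ‖u j ω‖ ≤ pmax (a ω) j * 1 :=
          mul_le_mul_of_nonneg_left (hu_norm j ω) (hPnonneg ω j)
      _ = pmax (a ω) j := mul_one _
  have hIY : ∀ j, Integrable (fun ω => ⟪Y j ω, D (g+j) ω⟫) μ := fun j =>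
    integrable_inner2 (hY2 j) (h2 (g+j) (Nat.le_add_right g j))
  have hOY : ∀ j, ∫ ω, ⟪Y j ω, D (g+j) ω⟫ ∂μ = 0 := fun j =>
    hO (g+j) (Nat.le_add_right g j) (Y j) (hYmeas j) (hY2 j)
  -- pointwise pathwise Doob inequality
  have hpoint : ∀ ω, pmax (a ω) n ^ 2
      ≤ 4 * (a ω n)^2 - 4 * ∑ j ∈ Finset.range n, ⟪Y j ω, D (g+j) ω⟫ := by
    intro ω
    have h0 := pmax_sq_le (a ω) n
    have hterm : ∀ j, ⟪Y j ω, D (g+j) ω⟫ ≤ pmax (a ω) j * (a ω (j+1) - a ω j) := by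
      intro j
      have hinner1 : ⟪u j ω, S (g+j) ω⟫ = a ω j := by
        by_cases h : S (g+j) ω = 0
        · simp [hudef, hadef, h]
        · have hn : ‖S (g+j) ω‖ ≠ 0 := norm_ne_zero_iff.mpr h
          rw [hudef]
          rw [real_inner_smul_left, real_inner_self_eq_norm_mul_norm]
          field_simp [hadef]
          exact rfl
      have hinner2 : ⟪u j ω, S (g+(j+1)) ω⟫ ≤ a ω (j+1) := by
        calc ⟪u j ω, S (g+(j+1)) ω⟫ ≤ ‖u j ω‖ * ‖S (g+(j+1)) ω‖ := real_inner_le_norm _ _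
          _ ≤ 1 * ‖S (g+(j+1)) ω‖ :=
              mul_le_mul_of_nonneg_right (hu_norm j ω) (norm_nonneg _)
          _ = a ω (j+1) := by rw [one_mul]
      have hD : ⟪u j ω, D (g+j) ω⟫ ≤ a ω (j+1) - a ω j := by
        have : ⟪u j ω, S (g+(j+1)) ω⟫ = ⟪u j ω, S (g+j) ω⟫ + ⟪u j ω, D (g+j) ω⟫ := by
          rw [hSsucc j ω, inner_add_right]
        linarith
      have : ⟪Y j ω, D (g+j) ω⟫ = pmax (a ω) j * ⟪u j ω, D (g+j) ω⟫ := by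
        rw [hYdef, real_inner_smul_left]
      rw [this]
      exact mul_le_mul_of_nonneg_left hD (hPnonneg ω j)
    have hsum : ∑ j ∈ Finset.range n, ⟪Y j ω, D (g+j) ω⟫
        ≤ ∑ j ∈ Finset.range n, pmax (a ω) j * (a ω (j+1) - a ω j) :=
      Finset.sum_le_sum fun j _ => hterm j
    linarith
  have hIP : Integrable (fun ω => pmax (a ω) n ^ 2) μ := (hP2 n).integrable_sq
  have hIRHS : Integrable (fun ω =>
      4 * (a ω n)^2 - 4 * ∑ j ∈ Finset.range n, ⟪Y j ω, D (g+j) ω⟫) μ :=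
    ((hInormSq (g+n)).const_mul 4).sub
      ((integrable_finset_sum _ (fun j _ => hIY j)).const_mul 4)
  have hmain : ∫ ω, pmax (a ω) n ^ 2 ∂μ ≤ 4 * ∫ ω, ‖S (g+n) ω‖^2 ∂μ := by
    calc ∫ ω, pmax (a ω) n ^ 2 ∂μ
        ≤ ∫ ω, (4 * (a ω n)^2 - 4 * ∑ j ∈ Finset.range n, ⟪Y j ω, D (g+j) ω⟫) ∂μ :=
          integral_mono hIP hIRHS hpoint
      _ = 4 * ∫ ω, (a ω n)^2 ∂μ
            - 4 * ∫ ω, ∑ j ∈ Finset.range n, ⟪Y j ω, D (g+j) ω⟫ ∂μ := by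
          rw [integral_sub ((hInormSq (g+n)).const_mul 4)
            ((integrable_finset_sum _ (fun j _ => hIY j)).const_mul 4),
            integral_const_mul, integral_const_mul]
      _ = 4 * ∫ ω, ‖S (g+n) ω‖^2 ∂μ := by
          rw [integral_finset_sum _ (fun j _ => hIY j),
            Finset.sum_eq_zero fun j _ => hOY j, mul_zero, sub_zero]
  constructor
  · exact hIP
  · calc ∫ ω, pmax (a ω) n ^ 2 ∂μ ≤ 4 * ∫ ω, ‖S (g+n) ω‖^2 ∂μ := hmain
      _ ≤ 4 * ∑ i ∈ Finset.Ico g (g+n), ∫ ω, ‖D i ω‖^2 ∂μ := by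
          have := hSbound n; linarith

end Prob

/-- Aggregated error `s_k(ω) = max_{t ∈ Γ_k} ‖∑_{i=γ_k}^{t-1} α_i e^i‖`. -/
def aggErr {Ω E : Type*} [NormedAddCommGroup E] [NormedSpace ℝ E]
    (a : ℕ → ℝ) (γ : ℕ → ℕ) (e : ℕ → Ω → E) (k : ℕ) (ω : Ω) : ℝ :=
  sSup ((fun t => ‖∑ i ∈ Finset.Ico (γ k) t, a i • e i ω‖) '' Set.Ioc (γ k) (γ (k + 1)))

lemma timeIdx_zero (a : ℕ → ℝ) (T : ℝ) : timeIdx a T 0 = 1 := rfl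
lemma timeIdx_one (a : ℕ → ℝ) (T : ℝ) : timeIdx a T 1 = 1 := rfl
lemma timeIdx_succ_succ (a : ℕ → ℝ) (T : ℝ) (k : ℕ) :
    timeIdx a T (k+2) = varpi a T (timeIdx a T (k+1)) := rfl

lemma timeIdx_pos (a : ℕ → ℝ) (T : ℝ) : ∀ k, 1 ≤ timeIdx a T k := by
  intro k
  match k with
  | 0 => exact le_rfl
  | 1 => exact le_rfl
  | k + 2 =>
    rw [timeIdx_succ_succ]
    calc 1 ≤ timeIdx a T (k+1) + 1 := by omega
      _ ≤ varpi a T (timeIdx a T (k+1)) := le_max_left _ _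

lemma timeIdx_succ_gt (a : ℕ → ℝ) (T : ℝ) (k : ℕ) (hk : 1 ≤ k) :
    timeIdx a T k < timeIdx a T (k+1) := by
  obtain ⟨j, rfl⟩ : ∃ j, k = j + 1 := ⟨k - 1, by omega⟩
  rw [timeIdx_succ_succ]
  calc timeIdx a T (j+1) < timeIdx a T (j+1) + 1 := by omega
    _ ≤ varpi a T (timeIdx a T (j+1)) := le_max_left _ _

lemma timeIdx_mono_succ (a : ℕ → ℝ) (T : ℝ) (k : ℕ) :
    timeIdx a T k ≤ timeIdx a T (k+1) := by
  rcases Nat.eq_zero_or_pos k with rfl|hk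
  · exact le_rfl
  · exact (timeIdx_succ_gt a T k hk).le

theorem stmt_1
    {Ω : Type*} {m0 : MeasurableSpace Ω} (μ : Measure Ω) [IsProbabilityMeasure μ]
    (ℱ : Filtration ℕ m0) {d : ℕ} (hd : 1 ≤ d)
    (f : EuclideanSpace ℝ (Fin d) → ℝ) (hf : Differentiable ℝ f)
    (hfb : BddBelow (Set.range f)) (L : ℝ) (hL : 0 < L)
    (hlip : ∀ v w, ‖gradient f v - gradient f w‖ ≤ L * ‖v - w‖)
    (lam nu : ℝ) (hlam : lam ∈ Set.Ico (0:ℝ) 1) (hnu : 0 ≤ nu)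
    (al : ℕ → ℝ) (hapos : ∀ k, 1 ≤ k → 0 < al k)
    (x0 : EuclideanSpace ℝ (Fin d)) (x e : ℕ → Ω → EuclideanSpace ℝ (Fin d))
    (hx0 : ∀ ω, x 0 ω = x0) (hx1 : ∀ ω, x 1 ω = x0)
    (hxmeas : ∀ k, StronglyMeasurable[ℱ k] (x k))
    (hupd : ∀ k, 1 ≤ k → ∀ ω, x (k + 1) ω =
      x k ω - al k • (gradient f (x k ω + nu • (x k ω - x (k - 1) ω)) - e k ω)
        + lam • (x k ω - x (k - 1) ω))
    (sg : ℝ) (hsg : 0 ≤ sg) (heL2 : ∀ k, 1 ≤ k → MemLp (e k) 2 μ)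
    (hemean : ∀ k, 1 ≤ k → μ[e k|ℱ k] =ᵐ[μ] 0)
    (hevar : ∀ k, 1 ≤ k → ∀ᵐ ω ∂μ, (μ[fun ω' => ‖e k ω'‖ ^ 2|ℱ k]) ω ≤ sg ^ 2)
    (be : ℕ → ℝ) (hbepos : ∀ k, 0 < be k) (hbemono : Monotone be)
    (hamono : ∀ k, 1 ≤ k → al (k + 1) ≤ al k)
    (hadiv : Tendsto (fun n => ∑ i ∈ Finset.Icc 1 n, al i) atTop atTop)
    (hasum : Summable (fun k => al (k + 1) ^ 2 * be (k + 1) ^ 2))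
    (T : ℝ) (hT : 0 < T) :
    ∀ᵐ ω ∂μ,
      Summable (fun k => be (timeIdx al T k) ^ 2 * aggErr al (timeIdx al T) e k ω ^ 2) := by
  classical
  set γ : ℕ → ℕ := timeIdx al T with hγdef
  have hγ1 : ∀ k, 1 ≤ γ k := timeIdx_pos al T
  have hγlt : ∀ k, 1 ≤ k → γ k < γ (k+1) := timeIdx_succ_gt al T
  have hγmono : ∀ k, γ k ≤ γ (k+1) := timeIdx_mono_succ al T
  -- gradient is continuous
  have hgradcont : Continuous (gradient f) := by
    refine (LipschitzWith.of_dist_le_mul (K := Real.toNNReal L) fun v w => ?_).continuous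
    rw [dist_eq_norm, dist_eq_norm, Real.coe_toNNReal L hL.le]
    exact hlip v w
  -- measurability of the noise from the dynamics
  have hemeas : ∀ k, 1 ≤ k → StronglyMeasurable[ℱ (k+1)] (e k) := by
    intro k hk
    have hxk : StronglyMeasurable[ℱ k] (x k) := hxmeas k
    have hxk1 : StronglyMeasurable[ℱ k] (x (k-1)) :=
      (hxmeas (k-1)).mono (ℱ.mono (Nat.sub_le k 1))
    have hG : StronglyMeasurable[ℱ k]
        (fun ω => gradient f (x k ω + nu • (x k ω - x (k-1) ω))) :=
      hgradcont.comp_stronglyMeasurable (hxk.add ((hxk.sub hxk1).const_smul nu))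
    have hne : al k ≠ 0 := (hapos k hk).ne'
    have heq : e k = fun ω => gradient f (x k ω + nu • (x k ω - x (k-1) ω))
        - (al k)⁻¹ • (x k ω + lam • (x k ω - x (k-1) ω) - x (k+1) ω) := by
      funext ω
      have h := hupd k hk ω
      have h2 : al k • (gradient f (x k ω + nu • (x k ω - x (k-1) ω)) - e k ω)
          = x k ω + lam • (x k ω - x (k-1) ω) - x (k+1) ω := by
        rw [h]; abel
      have h3 : gradient f (x k ω + nu • (x k ω - x (k-1) ω)) - e k ω
          = (al k)⁻¹ • (x k ω + lam • (x k ω - x (k-1) ω) - x (k+1) ω) := by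
        rw [← h2, inv_smul_smul₀ hne]
      rw [← h3]; abel
    rw [heq]
    refine (hG.mono (ℱ.mono (Nat.le_succ k))).sub ?_
    refine StronglyMeasurable.const_smul ?_ (al k)⁻¹
    exact ((hxk.mono (ℱ.mono (Nat.le_succ k))).add
      (((hxk.sub hxk1).const_smul lam).mono (ℱ.mono (Nat.le_succ k)))).sub (hxmeas (k+1))
  -- the increments
  set D : ℕ → Ω → EuclideanSpace ℝ (Fin d) := fun i ω => al i • e i ω with hDdef
  have hDmeas : ∀ i, 1 ≤ i → StronglyMeasurable[ℱ (i+1)] (D i) := fun i hi =>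
    (hemeas i hi).const_smul (al i)
  have hD2 : ∀ i, 1 ≤ i → MemLp (D i) 2 μ := fun i hi => by
    exact (heL2 i hi).const_smul (al i)
  have hOmain : ∀ i, 1 ≤ i → ∀ Y : Ω → EuclideanSpace ℝ (Fin d),
      StronglyMeasurable[ℱ i] Y → MemLp Y 2 μ → ∫ ω, ⟪Y ω, D i ω⟫ ∂μ = 0 := by
    intro i hi Y hY hY2
    have h1 : ∀ ω, ⟪Y ω, D i ω⟫ = al i * ⟪Y ω, e i ω⟫ := fun ω =>
      real_inner_smul_right _ _ _
    rw [integral_congr_ae (Eventually.of_forall h1), integral_const_mul,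
      ortho_zero ℱ i (heL2 i hi) (hemean i hi) hY hY2, mul_zero]
  -- second moment bound for the noise
  have hE2 : ∀ i, 1 ≤ i → ∫ ω, ‖e i ω‖^2 ∂μ ≤ sg^2 := by
    intro i hi
    have hint : Integrable (fun ω => ‖e i ω‖^2) μ :=
      (memLp_two_iff_integrable_sq_norm (heL2 i hi).aestronglyMeasurable).mp (heL2 i hi)
    calc ∫ ω, ‖e i ω‖^2 ∂μ
        = ∫ ω, (μ[fun ω' => ‖e i ω'‖^2|ℱ i]) ω ∂μ := (integral_condExp (ℱ.le i)).symm
      _ ≤ ∫ _ω, sg^2 ∂μ :=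
          integral_mono_ae integrable_condExp (integrable_const _) (hevar i hi)
      _ = sg^2 := by simp
  have hDint : ∀ i, 1 ≤ i → ∫ ω, ‖D i ω‖^2 ∂μ ≤ al i^2 * sg^2 := by
    intro i hi
    have h1 : ∀ ω, ‖D i ω‖^2 = al i^2 * ‖e i ω‖^2 := by
      intro ω
      rw [hDdef]
      simp only [norm_smul, Real.norm_eq_abs, mul_pow, sq_abs]
    rw [integral_congr_ae (Eventually.of_forall h1), integral_const_mul]
    exact mul_le_mul_of_nonneg_left (hE2 i hi) (sq_nonneg _)
  -- aggregated error: basic facts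
  have hagg_nonneg : ∀ k ω, 0 ≤ aggErr al γ e k ω := by
    intro k ω
    apply Real.sSup_nonneg
    rintro v ⟨t, _, rfl⟩
    exact norm_nonneg _
  have hagg_le : ∀ k ω, aggErr al γ e k ω
      ≤ pmax (fun j => ‖∑ i ∈ Finset.Ico (γ k) (γ k + j), D i ω‖) (γ (k+1) - γ k) := by
    intro k ω
    apply Real.sSup_le
    · rintro v ⟨t, ht, rfl⟩
      have ht' : γ k < t ∧ t ≤ γ (k+1) := ht
      have hteq : γ k + (t - γ k) = t := by omega
      have := le_pmax (fun j => ‖∑ i ∈ Finset.Ico (γ k) (γ k + j), D i ω‖)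
        (show t - γ k ≤ γ (k+1) - γ k by omega)
      simpa only [hteq] using this
    · exact pmax_nonneg (fun j => norm_nonneg _) _
  -- measurability of the aggregated error
  have hemeas0 : ∀ i, 1 ≤ i → StronglyMeasurable[m0] (e i) := fun i hi =>
    (hemeas i hi).mono (ℱ.le (i+1))
  have haggmeas : ∀ k, Measurable (fun ω => aggErr al γ e k ω) := by
    intro k
    by_cases h : γ k < γ (k+1)
    · have hne : (Finset.Ioc (γ k) (γ (k+1))).Nonempty := by
        refine ⟨γ k + 1, ?_⟩
        rw [Finset.mem_Ioc]; omega
      have heq : (fun ω => aggErr al γ e k ω) = fun ω =>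
          (Finset.Ioc (γ k) (γ (k+1))).sup' hne
            (fun t => ‖∑ i ∈ Finset.Ico (γ k) t, al i • e i ω‖) := by
        funext ω
        rw [Finset.sup'_eq_csSup_image]
        unfold aggErr
        rw [← Finset.coe_Ioc]
      rw [heq]
      apply measurable_finset_sup'
      intro t
      have : StronglyMeasurable[m0] (fun ω => ∑ i ∈ Finset.Ico (γ k) t, al i • e i ω) := by
        apply Finset.stronglyMeasurable_fun_sum
        intro i hi
        rw [Finset.mem_Ico] at hi
        exact (hemeas0 i (le_trans (hγ1 k) hi.1)).const_smul (al i)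
      exact this.norm.measurable
    · have heq : (fun ω => aggErr al γ e k ω) = fun _ => (0:ℝ) := by
        funext ω
        unfold aggErr
        rw [Set.Ioc_eq_empty (by omega), Set.image_empty, Real.sSup_empty]
      rw [heq]
      exact measurable_const
  -- summability bookkeeping
  set c : ℕ → ℝ := fun i => al i^2 * be i^2 with hcdef
  have hcnonneg : ∀ i, 0 ≤ c i := fun i => mul_nonneg (sq_nonneg _) (sq_nonneg _)
  have hcsum : Summable (fun j => c (j+1)) := hasum
  have hCle : ∀ n, ∑ i ∈ Finset.Ico 1 n, c i ≤ ∑' j, c (j+1) := by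
    intro n
    rw [Finset.sum_Ico_eq_sum_range]
    have h1 : ∀ j ∈ Finset.range (n-1), c (1+j) = c (j+1) := fun j _ => by rw [add_comm]
    rw [Finset.sum_congr rfl h1]
    exact Summable.sum_le_tsum _ (fun j _ => hcnonneg _) hcsum
  set B : ℕ → ℝ := fun k => ∑ i ∈ Finset.Ico (γ k) (γ (k+1)), c i with hBdef
  have hBnonneg : ∀ k, 0 ≤ B k := fun k => Finset.sum_nonneg fun i _ => hcnonneg i
  have hBtel : ∀ K, ∑ k ∈ Finset.range K, B k = ∑ i ∈ Finset.Ico 1 (γ K), c i := by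
    intro K
    induction K with
    | zero => simp [hγdef, timeIdx_zero]
    | succ K ih =>
      rw [Finset.sum_range_succ, ih, hBdef,
        Finset.sum_Ico_consecutive _ (hγ1 K) (hγmono K)]
  have hBsum : Summable B := by
    apply summable_of_sum_range_le hBnonneg
    intro K
    rw [hBtel K]
    exact hCle (γ K)
  -- per-block expected bound
  set m : ℕ → ℝ := fun k =>
    be (γ k)^2 * (4 * ∑ i ∈ Finset.Ico (γ k) (γ (k+1)), al i^2 * sg^2) with hmdef
  have hmnonneg : ∀ k, 0 ≤ m k := fun k =>
    mul_nonneg (sq_nonneg _) (mul_nonneg (by norm_num)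
      (Finset.sum_nonneg fun i _ => mul_nonneg (sq_nonneg _) (sq_nonneg _)))
  have hm_le : ∀ k, m k ≤ (4 * sg^2) * B k := by
    intro k
    show be (γ k)^2 * (4 * ∑ i ∈ Finset.Ico (γ k) (γ (k+1)), al i^2 * sg^2)
      ≤ (4 * sg^2) * ∑ i ∈ Finset.Ico (γ k) (γ (k+1)), c i
    rw [Finset.mul_sum, Finset.mul_sum, Finset.mul_sum]
    apply Finset.sum_le_sum
    intro i hi
    rw [Finset.mem_Ico] at hi
    have hbe : be (γ k) ≤ be i := hbemono hi.1
    have hbe2 : be (γ k)^2 ≤ be i^2 :=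
      pow_le_pow_left₀ (hbepos (γ k)).le hbe 2
    have := mul_le_mul_of_nonneg_left hbe2 (mul_nonneg (by norm_num : (0:ℝ) ≤ 4)
      (mul_nonneg (sq_nonneg (al i)) (sq_nonneg sg)))
    calc be (γ k)^2 * (4 * (al i^2 * sg^2)) = 4 * (al i^2 * sg^2) * be (γ k)^2 := by ring
      _ ≤ 4 * (al i^2 * sg^2) * be i^2 := this
      _ = 4 * sg^2 * (al i^2 * be i^2) := by ring
  have hmsum : Summable m :=
    Summable.of_nonneg_of_le hmnonneg hm_le (hBsum.mul_left (4 * sg^2))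
  -- the functions in question
  set F : ℕ → Ω → ℝ := fun k ω => be (γ k)^2 * aggErr al γ e k ω^2 with hFdef
  have hFnonneg : ∀ k ω, 0 ≤ F k ω := fun k ω =>
    mul_nonneg (sq_nonneg _) (sq_nonneg _)
  have hFmeas : ∀ k, Measurable (F k) := fun k =>
    (measurable_const.mul ((haggmeas k).pow_const 2))
  -- the key integral bound
  have hlin : ∀ k, ∫⁻ ω, ENNReal.ofReal (F k ω) ∂μ ≤ ENNReal.ofReal (m k) := by
    intro k
    rcases Nat.eq_zero_or_pos k with rfl|hk
    · have hγ01 : γ 0 = γ 1 := rfl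
      have hzero : ∀ ω, F 0 ω = 0 := by
        intro ω
        have : aggErr al γ e 0 ω = 0 := by
          unfold aggErr
          rw [← hγ01, Set.Ioc_self, Set.image_empty, Real.sSup_empty]
        show be (γ 0)^2 * aggErr al γ e 0 ω^2 = 0
        rw [this]
        ring
      simp only [hzero]
      simp
    · -- k ≥ 1
      have hblock := block_bound (μ := μ) ℱ D (γ k)
        (fun i hi => hDmeas i (le_trans (hγ1 k) hi))
        (fun i hi => hD2 i (le_trans (hγ1 k) hi))
        (fun i hi => hOmain i (le_trans (hγ1 k) hi))
        (γ (k+1) - γ k)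
      obtain ⟨hIP, hbound⟩ := hblock
      have hadd : γ k + (γ (k+1) - γ k) = γ (k+1) := by
        have := hγmono k; omega
      rw [hadd] at hbound
      set P : Ω → ℝ := fun ω =>
        pmax (fun j => ‖∑ i ∈ Finset.Ico (γ k) (γ k + j), D i ω‖) (γ (k+1) - γ k) with hPdef
      have hP_nonneg : ∀ ω, 0 ≤ P ω := fun ω => pmax_nonneg (fun j => norm_nonneg _) _
      have hptw : ∀ ω, F k ω ≤ be (γ k)^2 * P ω^2 := by
        intro ω
        exact mul_le_mul_of_nonneg_left
          (pow_le_pow_left₀ (hagg_nonneg k ω) (hagg_le k ω) 2) (sq_nonneg _)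
      have hIbP : Integrable (fun ω => be (γ k)^2 * P ω^2) μ := hIP.const_mul _
      calc ∫⁻ ω, ENNReal.ofReal (F k ω) ∂μ
          ≤ ∫⁻ ω, ENNReal.ofReal (be (γ k)^2 * P ω^2) ∂μ :=
            lintegral_mono fun ω => ENNReal.ofReal_le_ofReal (hptw ω)
        _ = ENNReal.ofReal (∫ ω, be (γ k)^2 * P ω^2 ∂μ) :=
            (ofReal_integral_eq_lintegral_ofReal hIbP
              (Eventually.of_forall fun ω =>
                mul_nonneg (sq_nonneg _) (sq_nonneg _))).symm
        _ ≤ ENNReal.ofReal (m k) := by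
            apply ENNReal.ofReal_le_ofReal
            rw [integral_const_mul]
            rw [hmdef]
            apply mul_le_mul_of_nonneg_left _ (sq_nonneg _)
            calc ∫ ω, P ω^2 ∂μ
                ≤ 4 * ∑ i ∈ Finset.Ico (γ k) (γ (k+1)), ∫ ω, ‖D i ω‖^2 ∂μ := hbound
              _ ≤ 4 * ∑ i ∈ Finset.Ico (γ k) (γ (k+1)), al i^2 * sg^2 := by
                  apply mul_le_mul_of_nonneg_left _ (by norm_num : (0:ℝ) ≤ 4)
                  apply Finset.sum_le_sum
                  intro i hi
                  rw [Finset.mem_Ico] at hi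
                  exact hDint i (le_trans (hγ1 k) hi.1)
  -- conclude by a Borel--Cantelli style argument
  have htsum_fin : ∑' k, ENNReal.ofReal (m k) < ⊤ := by
    rw [← ENNReal.ofReal_tsum_of_nonneg hmnonneg hmsum]
    exact ENNReal.ofReal_lt_top
  have hmeas' : ∀ k, Measurable (fun ω => ENNReal.ofReal (F k ω)) := fun k =>
    ENNReal.measurable_ofReal.comp (hFmeas k)
  have hintfin : ∫⁻ ω, ∑' k, ENNReal.ofReal (F k ω) ∂μ < ⊤ := by
    rw [lintegral_tsum (fun k => (hmeas' k).aemeasurable)]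
    exact lt_of_le_of_lt (ENNReal.tsum_le_tsum hlin) htsum_fin
  have hae : ∀ᵐ ω ∂μ, ∑' k, ENNReal.ofReal (F k ω) < ⊤ :=
    ae_lt_top (Measurable.ennreal_tsum hmeas') hintfin.ne
  filter_upwards [hae] with ω hω
  have hsum' := ENNReal.summable_toReal hω.ne
  refine hsum'.congr fun k => ?_
  rw [ENNReal.toReal_ofReal (hFnonneg k ω)]
end
end

section
/- Let f : ℝ^d → ℝ be differentiable and satisfy the Łojasiewicz inequality at a critical point x* with exponent θ ∈ [1/2,1), and let ζ > 0. Then the merit function M : ℝ^d × ℝ^d → ℝ, M(x,z) = f(z) + ζ‖z − x‖², satisfies the Łojasiewicz inequality at (x*, x*) with the same exponent θ: there exist η ∈ (0,∞], a neighborhood U(x*) of x*, and a constant C > 0 such that for all x, z ∈ V(x*) := U(x*) ∩ {y ∈ ℝ^d : |f(y) − f(x*)| < η}, one has ‖∇M(x,z)‖ ≥ C |M(x,z) − f(x*)|^θ. -/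
open Filter Topology ENNReal

noncomputable section

lemma real_rpow_add_le {a b p : ℝ} (ha : 0 ≤ a) (hb : 0 ≤ b) (hp : 0 ≤ p) (hp1 : p ≤ 1) :
    (a + b) ^ p ≤ a ^ p + b ^ p := by
  have h := NNReal.rpow_add_le_add_rpow (⟨a, ha⟩ : NNReal) (⟨b, hb⟩ : NNReal) hp hp1
  have h2 := NNReal.coe_le_coe.mpr h
  exact h2

theorem stmt_9 {d : ℕ} (hd : 1 ≤ d) (f : EuclideanSpace ℝ (Fin d) → ℝ)
    (hf : Differentiable ℝ f) (zeta : ℝ) (hzeta : 0 < zeta)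
    (xstar : EuclideanSpace ℝ (Fin d)) (hcrit : gradient f xstar = 0)
    (th : ℝ) (hth : th ∈ Set.Ico (1/2 : ℝ) 1)
    (Cf : ℝ) (hCf : 0 < Cf) (eta : ℝ≥0∞) (heta : 0 < eta)
    (U : Set (EuclideanSpace ℝ (Fin d))) (hU : U ∈ nhds xstar)
    (hLoj : ∀ v ∈ U, 0 < |f v - f xstar| → ENNReal.ofReal |f v - f xstar| < eta →
      Cf * |f v - f xstar| ^ th ≤ ‖gradient f v‖) :
    ∃ eta' : ℝ≥0∞, 0 < eta' ∧ ∃ U' ∈ nhds xstar, ∃ C : ℝ, 0 < C ∧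
      ∀ v ∈ U', ∀ w ∈ U',
        ENNReal.ofReal |f v - f xstar| < eta' → ENNReal.ofReal |f w - f xstar| < eta' →
        C * |f w + zeta * ‖w - v‖ ^ 2 - f xstar| ^ th ≤
          Real.sqrt (‖(2 * zeta) • (v - w)‖ ^ 2
            + ‖gradient f w + (2 * zeta) • (w - v)‖ ^ 2) := by
  obtain ⟨hth0, hth1⟩ := hth
  have hthpos : (0 : ℝ) < th := lt_of_lt_of_le (by norm_num) hth0
  set K : ℝ := 1 / Cf + zeta ^ th / (2 * zeta) with hKdef
  have hzp : (0 : ℝ) < zeta ^ th := Real.rpow_pos_of_pos hzeta th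
  have hKpos : 0 < K := by positivity
  refine ⟨eta, heta, U ∩ Metric.ball xstar (1/2),
    Filter.inter_mem hU (Metric.ball_mem_nhds _ (by norm_num)),
    1 / (K * Real.sqrt 2), by positivity, ?_⟩
  rintro v ⟨hvU, hvB⟩ w ⟨hwU, hwB⟩ hve hwe
  set r := ‖w - v‖ with hr
  have hr0 : (0 : ℝ) ≤ r := norm_nonneg _
  have hr1 : r ≤ 1 := by
    have h1 : dist w v ≤ dist w xstar + dist xstar v := dist_triangle _ _ _
    have h2 : dist w xstar < 1/2 := Metric.mem_ball.mp hwB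
    have h3 : dist xstar v < 1/2 := by
      rw [dist_comm]; exact Metric.mem_ball.mp hvB
    have : dist w v ≤ 1 := by linarith
    simpa [hr, dist_eq_norm] using this
  set A : ℝ := ‖(2 * zeta) • (v - w)‖ with hA
  set B : ℝ := ‖gradient f w + (2 * zeta) • (w - v)‖ with hB
  have hA0 : 0 ≤ A := norm_nonneg _
  have hB0 : 0 ≤ B := norm_nonneg _
  have hAval : A = 2 * zeta * r := by
    rw [hA, norm_smul, Real.norm_eq_abs, abs_of_pos (by linarith), ← neg_sub w v,
      norm_neg, hr]
  have hgrad : ‖gradient f w‖ ≤ A + B := by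
    have : gradient f w = (gradient f w + (2 * zeta) • (w - v)) - (2 * zeta) • (w - v) := by
      abel
    calc ‖gradient f w‖ ≤ B + ‖(2 * zeta) • (w - v)‖ := by
          rw [this]; exact norm_sub_le _ _
      _ = B + A := by
          congr 1
          rw [hA, ← neg_sub w v, smul_neg, norm_neg]
      _ = A + B := add_comm _ _
  -- term 1
  have h1 : |f w - f xstar| ^ th ≤ (A + B) / Cf := by
    rcases eq_or_lt_of_le (abs_nonneg (f w - f xstar)) with h0 | h0
    · rw [← h0, Real.zero_rpow hthpos.ne']
      positivity
    · have hL := hLoj w hwU h0 hwe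
      rw [le_div_iff₀ hCf]
      calc |f w - f xstar| ^ th * Cf = Cf * |f w - f xstar| ^ th := mul_comm _ _
        _ ≤ ‖gradient f w‖ := hL
        _ ≤ A + B := hgrad
  -- term 2
  have hrth : r ^ (2 * th) ≤ r := by
    rcases eq_or_lt_of_le hr0 with h0 | h0
    · rw [← h0, Real.zero_rpow (by positivity)]
    · calc r ^ (2 * th) ≤ r ^ (1 : ℝ) :=
            Real.rpow_le_rpow_of_exponent_ge h0 hr1 (by linarith)
        _ = r := Real.rpow_one r
  have h2 : (zeta * r ^ 2) ^ th ≤ zeta ^ th * r := by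
    rw [Real.mul_rpow hzeta.le (by positivity)]
    have : (r ^ 2 : ℝ) ^ th = r ^ (2 * th) := by
      rw [← Real.rpow_natCast r 2, ← Real.rpow_mul hr0]
      norm_num
    rw [this]
    exact mul_le_mul_of_nonneg_left hrth hzp.le
  -- subadditivity
  have hsub : |f w + zeta * r ^ 2 - f xstar| ^ th
      ≤ |f w - f xstar| ^ th + (zeta * r ^ 2) ^ th := by
    have habs : |f w + zeta * r ^ 2 - f xstar| ≤ |f w - f xstar| + zeta * r ^ 2 := by
      have : f w + zeta * r ^ 2 - f xstar = (f w - f xstar) + zeta * r ^ 2 := by ring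
      rw [this]
      calc |(f w - f xstar) + zeta * r ^ 2| ≤ |f w - f xstar| + |zeta * r ^ 2| := abs_add_le _ _
        _ = |f w - f xstar| + zeta * r ^ 2 := by
            congr 1; exact abs_of_nonneg (by positivity)
    calc |f w + zeta * r ^ 2 - f xstar| ^ th
        ≤ (|f w - f xstar| + zeta * r ^ 2) ^ th :=
          Real.rpow_le_rpow (abs_nonneg _) habs hthpos.le
      _ ≤ |f w - f xstar| ^ th + (zeta * r ^ 2) ^ th :=
          real_rpow_add_le (abs_nonneg _) (by positivity) hthpos.le hth1.le
  -- combine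
  have hmain : |f w + zeta * r ^ 2 - f xstar| ^ th ≤ K * (A + B) := by
    have hz2 : zeta ^ th * r = zeta ^ th / (2 * zeta) * A := by
      rw [hAval]; field_simp
    calc |f w + zeta * r ^ 2 - f xstar| ^ th
        ≤ |f w - f xstar| ^ th + (zeta * r ^ 2) ^ th := hsub
      _ ≤ (A + B) / Cf + zeta ^ th * r := add_le_add h1 h2
      _ = (A + B) / Cf + zeta ^ th / (2 * zeta) * A := by rw [hz2]
      _ ≤ (A + B) / Cf + zeta ^ th / (2 * zeta) * (A + B) := by
          have := mul_le_mul_of_nonneg_left (show A ≤ A + B by linarith)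
            (show (0:ℝ) ≤ zeta ^ th / (2 * zeta) by positivity)
          linarith
      _ = K * (A + B) := by rw [hKdef]; ring
  have hsqrt : (A + B) / Real.sqrt 2 ≤ Real.sqrt (A ^ 2 + B ^ 2) := by
    have h := Real.sqrt_le_sqrt (show (A + B) ^ 2 ≤ 2 * (A ^ 2 + B ^ 2) by
      nlinarith [sq_nonneg (A - B)])
    rw [Real.sqrt_sq (by positivity), Real.sqrt_mul (by norm_num : (0:ℝ) ≤ 2)] at h
    rw [div_le_iff₀ (by positivity : (0:ℝ) < Real.sqrt 2), mul_comm]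
    exact h
  calc 1 / (K * Real.sqrt 2) * |f w + zeta * r ^ 2 - f xstar| ^ th
      ≤ 1 / (K * Real.sqrt 2) * (K * (A + B)) := by
        gcongr
    _ = (A + B) / Real.sqrt 2 := by
        field_simp
    _ ≤ Real.sqrt (A ^ 2 + B ^ 2) := hsqrt
end
end

section
/- Let f : ℝ² → ℝ be given by f(x₁, x₂) = sin(x₁), let {α_k} be positive reals, and let {e^k} ⊂ ℝ² be any sequence with e^k ∈ {(0,1), (0,−1)} for all k. Consider SGD iterates x^{k+1} = x^k − α_k(∇f(x^k) − e^k) from any x^1 ∈ ℝ². Then ‖x^{k+1} − x^k‖ = α_k·√(‖∇f(x^k)‖² + 1) ≥ α_k for every k; consequently, if Σ_k α_k = ∞ then Σ_k ‖x^{k+1} − x^k‖ = ∞, so the iterates do not have finite length. -/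
open Filter Topology

noncomputable section

lemma grad_aux (f : EuclideanSpace ℝ (Fin 2) → ℝ)
    (hfdef : ∀ v : EuclideanSpace ℝ (Fin 2), f v = Real.sin (v 0))
    (p : EuclideanSpace ℝ (Fin 2)) :
    gradient f p = EuclideanSpace.single 0 (Real.cos (p 0)) := by
  have hF : HasFDerivAt f (Real.cos (p 0) • (EuclideanSpace.proj (0 : Fin 2) : EuclideanSpace ℝ (Fin 2) →L[ℝ] ℝ)) p := by
    have h1 : HasFDerivAt (fun v : EuclideanSpace ℝ (Fin 2) => v 0)
        (EuclideanSpace.proj (0 : Fin 2) : EuclideanSpace ℝ (Fin 2) →L[ℝ] ℝ) p :=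
      by simpa using (EuclideanSpace.proj (0 : Fin 2) : EuclideanSpace ℝ (Fin 2) →L[ℝ] ℝ).hasFDerivAt (x := p)
    have h2 := (Real.hasDerivAt_sin (p 0)).comp_hasFDerivAt p h1
    have : f = fun v : EuclideanSpace ℝ (Fin 2) => Real.sin (v 0) := funext hfdef
    rw [this]
    exact h2
  have hG : HasGradientAt f (EuclideanSpace.single (0 : Fin 2) (Real.cos (p 0))) p := by
    rw [hasGradientAt_iff_hasFDerivAt]
    refine hF.congr_fderiv ?_
    ext v
    simp [EuclideanSpace.inner_single_left]
  exact hG.gradient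

theorem stmt_18 (f : EuclideanSpace ℝ (Fin 2) → ℝ)
    (hfdef : ∀ v : EuclideanSpace ℝ (Fin 2), f v = Real.sin (v 0))
    (a : ℕ → ℝ) (hapos : ∀ k, 1 ≤ k → 0 < a k)
    (e : ℕ → EuclideanSpace ℝ (Fin 2))
    (he : ∀ k, e k 0 = 0 ∧ (e k 1 = 1 ∨ e k 1 = -1))
    (x : ℕ → EuclideanSpace ℝ (Fin 2))
    (hupd : ∀ k, 1 ≤ k → x (k + 1) = x k - a k • (gradient f (x k) - e k)) :
    (∀ k, 1 ≤ k →
      ‖x (k + 1) - x k‖ = a k * Real.sqrt (‖gradient f (x k)‖ ^ 2 + 1) ∧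
      a k ≤ ‖x (k + 1) - x k‖) ∧
    (Tendsto (fun n => ∑ i ∈ Finset.Icc 1 n, a i) atTop atTop →
      ¬ Summable fun k => ‖x (k + 1) - x k‖) := by
  have main : ∀ k, 1 ≤ k →
      ‖x (k + 1) - x k‖ = a k * Real.sqrt (‖gradient f (x k)‖ ^ 2 + 1) ∧
      a k ≤ ‖x (k + 1) - x k‖ := by
    intro k hk
    have hg := grad_aux f hfdef (x k)
    set c := Real.cos (x k 0) with hc
    have hgnorm : ‖gradient f (x k)‖ ^ 2 = c ^ 2 := by
      rw [hg, EuclideanSpace.norm_single, Real.norm_eq_abs, sq_abs]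
    have h0 : (gradient f (x k) - e k) 0 = c := by
      have := (he k).1
      simp [hg, this, EuclideanSpace.single_apply]
    have h1 : ((gradient f (x k) - e k) 1) ^ 2 = 1 := by
      have hg1 : gradient f (x k) 1 = 0 := by
        rw [hg]; simp [EuclideanSpace.single_apply]
      rcases (he k).2 with h | h <;>
        simp [PiLp.sub_apply, hg1, h]
    have hnorm : ‖gradient f (x k) - e k‖ = Real.sqrt (c ^ 2 + 1) := by
      rw [EuclideanSpace.norm_eq]
      congr 1
      rw [Fin.sum_univ_two]
      rw [Real.norm_eq_abs, Real.norm_eq_abs, sq_abs, sq_abs, h0, h1]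
    have hdiff : x (k + 1) - x k = -(a k • (gradient f (x k) - e k)) := by
      rw [hupd k hk]; abel
    have hne : ‖x (k + 1) - x k‖ = a k * Real.sqrt (c ^ 2 + 1) := by
      rw [hdiff, norm_neg, norm_smul, hnorm, Real.norm_eq_abs,
        abs_of_pos (hapos k hk)]
    constructor
    · rw [hne, hgnorm]
    · rw [hne]
      have h1le : (1 : ℝ) ≤ Real.sqrt (c ^ 2 + 1) := by
        have := Real.sqrt_le_sqrt (show (1 : ℝ) ≤ c ^ 2 + 1 by nlinarith [sq_nonneg c])
        simpa using this
      nlinarith [hapos k hk]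
  refine ⟨main, fun hdiv hsum => ?_⟩
  have hb : ∀ n, ∑ i ∈ Finset.Icc 1 n, a i ≤ ∑' k, ‖x (k + 1) - x k‖ := by
    intro n
    calc ∑ i ∈ Finset.Icc 1 n, a i
        ≤ ∑ i ∈ Finset.Icc 1 n, ‖x (i + 1) - x i‖ :=
          Finset.sum_le_sum fun i hi => (main i (Finset.mem_Icc.mp hi).1).2
      _ ≤ ∑' k, ‖x (k + 1) - x k‖ :=
          sum_le_hasSum _ (fun i _ => norm_nonneg _) hsum.hasSum
  obtain ⟨n, hn⟩ :=
    (hdiv.eventually (eventually_gt_atTop (∑' k, ‖x (k + 1) - x k‖))).exists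
  exact absurd (hb n) (not_le.mpr hn)
end
end
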